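/- Fix $\ell \in \mathbb{N}$ and $a > 0$. For $f_n(y) = e^{y^2}(1 - y^2/n)^n$, there exists a constant $c_{\ell,a}$ such that for all $n \ge 1$ (with $\ell \ge 1$) and all $|y| \le a$ with $a^2 < n$, $|f_n^{(\ell)}(y)| \le c_{\ell,a}/n$. -/

import Mathlib

open Finset in
private lemma iterd_add {f g : ℝ → ℝ} {j : ℕ} (hf : ContDiff ℝ (⊤ : ℕ∞) f) (hg : ContDiff ℝ (⊤ : ℕ∞) g) (y : ℝ) :
    iteratedDeriv j (fun t => f t + g t) y = iteratedDeriv j f y + iteratedDeriv j g y := by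
  have h : (fun t => f t + g t) = f + g := rfl
  rw [h, ← iteratedDerivWithin_univ, ← iteratedDerivWithin_univ, ← iteratedDerivWithin_univ]
  exact iteratedDerivWithin_add (Set.mem_univ y) uniqueDiffOn_univ
    (hf.of_le (by exact_mod_cast le_top)).contDiffWithinAt (hg.of_le (by exact_mod_cast le_top)).contDiffWithinAt

private lemma iterd_const_mul {f : ℝ → ℝ} {j : ℕ} (hf : ContDiff ℝ (j : ℕ∞) f) (c : ℝ) (y : ℝ) :
    iteratedDeriv j (fun t => c * f t) y = c * iteratedDeriv j f y := by
  rw [← iteratedDerivWithin_univ, ← iteratedDerivWithin_univ]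
  exact iteratedDerivWithin_const_mul (Set.mem_univ y) uniqueDiffOn_univ c hf.contDiffWithinAt

private lemma iter_id_mul : ∀ (j : ℕ) (g : ℝ → ℝ), ContDiff ℝ (⊤ : ℕ∞) g → ∀ y : ℝ,
    iteratedDeriv j (fun t => t * g t) y
      = y * iteratedDeriv j g y + (j : ℝ) * iteratedDeriv (j - 1) g y := by
  intro j
  induction j with
  | zero => intro g hg y; simp
  | succ j ih =>
    intro g hg y
    have hdg : ContDiff ℝ (⊤ : ℕ∞) (deriv g) := (contDiff_infty_iff_deriv.mp hg).2
    have hF : deriv (fun t => t * g t) = fun t => g t + t * deriv g t := by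
      funext t
      rw [deriv_fun_mul differentiableAt_fun_id (hg.differentiable (by simp) t)]
      simp only [deriv_id'']; ring
    have hid : ContDiff ℝ (⊤ : ℕ∞) (fun t : ℝ => t * deriv g t) := contDiff_id.mul hdg
    rw [iteratedDeriv_succ', hF, iterd_add hg hid y, ih (deriv g) hdg y]
    rw [iteratedDeriv_succ' (n := j) (f := g)]
    have hj : (j : ℝ) * iteratedDeriv (j - 1) (deriv g) y = (j : ℝ) * iteratedDeriv j g y := by
      cases j with
      | zero => simp
      | succ i =>
        rw [show i + 1 - 1 = i from rfl, ← iteratedDeriv_succ']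
    rw [hj]
    push_cast
    ring

private lemma iterd_const (j : ℕ) (c : ℝ) : iteratedDeriv (j+1) (fun _ : ℝ => c) = fun _ => 0 := by
  induction j with
  | zero => funext y; simp [iteratedDeriv_one]
  | succ j ih => rw [iteratedDeriv_succ, ih]; funext y; simp

private lemma pow_base_bound {a : ℝ} {n m : ℕ} (hn : a^2 < (n:ℝ)) {y : ℝ} (hy : |y| ≤ a) :
    |(1 - y^2/(n:ℝ))^m| ≤ 1 := by
  have hn0 : (0:ℝ) < n := lt_of_le_of_lt (sq_nonneg a) hn
  have hy2 : y^2 ≤ a^2 := by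
    rw [← sq_abs y]; exact pow_le_pow_left₀ (abs_nonneg y) hy 2
  have h1 : 0 ≤ 1 - y^2/(n:ℝ) := by
    have : y^2/(n:ℝ) ≤ 1 := by rw [div_le_one hn0]; linarith
    linarith
  have h2 : 1 - y^2/(n:ℝ) ≤ 1 := by
    have : 0 ≤ y^2/(n:ℝ) := by positivity
    linarith
  rw [abs_pow]
  exact pow_le_one₀ (abs_nonneg _) (by rw [abs_of_nonneg h1]; exact h2)

private lemma contDiff_g (n m : ℕ) : ContDiff ℝ (⊤ : ℕ∞) (fun t : ℝ => (1 - t^2/(n:ℝ))^m) :=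
  (contDiff_const.sub ((contDiff_id.pow 2).div_const _)).pow m

private lemma deriv_g (n k : ℕ) :
    deriv (fun t : ℝ => (1 - t^2/(n:ℝ))^(k+1))
      = fun t => (-(2*((k:ℝ)+1))/(n:ℝ)) * (t * (1 - t^2/(n:ℝ))^k) := by
  funext t
  have h1 : HasDerivAt (fun s : ℝ => s^2) (2*t) t := by simpa using hasDerivAt_pow 2 t
  have h2 : HasDerivAt (fun s : ℝ => 1 - s^2/(n:ℝ)) (-(2*t/(n:ℝ))) t := by
    simpa using (h1.div_const (n:ℝ)).const_sub 1
  have h3 := h2.pow (k+1)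
  rw [(show HasDerivAt (fun s : ℝ => (1 - s^2/(n:ℝ))^(k+1)) _ t from h3).deriv]
  push_cast
  ring

private def GB (a : ℝ) (j : ℕ) : Prop :=
  ∃ C : ℝ, 0 ≤ C ∧ ∀ n : ℕ, a^2 < (n:ℝ) → ∀ m : ℕ, m ≤ n → ∀ y : ℝ, |y| ≤ a →
    |iteratedDeriv j (fun t : ℝ => (1 - t^2/(n:ℝ))^m) y| ≤ C

private lemma gb_zero (a : ℝ) : GB a 0 := by
  refine ⟨1, zero_le_one, fun n hn m _ y hy => ?_⟩
  simpa [iteratedDeriv_zero] using pow_base_bound hn hy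

private lemma gb_one {a : ℝ} (ha : 0 ≤ a) : GB a 1 := by
  refine ⟨2*a, by positivity, fun n hn m hm y hy => ?_⟩
  have hn0 : (0:ℝ) < n := lt_of_le_of_lt (sq_nonneg a) hn
  match m with
  | 0 =>
    simp only [pow_zero, iteratedDeriv_one, deriv_const']
    simpa using by positivity
  | (k+1) =>
    rw [iteratedDeriv_one, deriv_g n k]
    have hkn : ((k:ℝ)+1) ≤ (n:ℝ) := by exact_mod_cast hm
    have hc : |(-(2*((k:ℝ)+1))/(n:ℝ))| ≤ 2 := by
      rw [abs_div, abs_neg, abs_of_nonneg (by positivity), abs_of_pos hn0, div_le_iff₀ hn0]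
      nlinarith
    have hin : |y * (1 - y^2/(n:ℝ))^k| ≤ a := by
      rw [abs_mul]
      calc |y| * |(1 - y^2/(n:ℝ))^k| ≤ a * 1 :=
            mul_le_mul hy (pow_base_bound hn hy) (abs_nonneg _) ha
        _ = a := mul_one a
    rw [abs_mul]
    calc |(-(2*((k:ℝ)+1))/(n:ℝ))| * |y * (1 - y^2/(n:ℝ))^k| ≤ 2 * a :=
          mul_le_mul hc hin (abs_nonneg _) (by norm_num)
      _ = 2*a := rfl

private lemma gb_step {a : ℝ} (ha : 0 ≤ a) (j : ℕ) (h0 : GB a j) (h1 : GB a (j+1)) :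
    GB a (j+2) := by
  obtain ⟨C0, hC00, hC0⟩ := h0
  obtain ⟨C1, hC10, hC1⟩ := h1
  refine ⟨2*(a*C1 + ((j:ℝ)+1)*C0), by positivity, fun n hn m hm y hy => ?_⟩
  have hn0 : (0:ℝ) < n := lt_of_le_of_lt (sq_nonneg a) hn
  match m with
  | 0 =>
    simp only [pow_zero]
    rw [show j+2 = (j+1)+1 from rfl, iterd_const]
    simpa using by positivity
  | (k+1) =>
    have hkn : ((k:ℝ)+1) ≤ (n:ℝ) := by exact_mod_cast hm
    have hkle : k ≤ n := Nat.le_of_succ_le hm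
    have hsm : ContDiff ℝ ((j+1 : ℕ) : ℕ∞) (fun t : ℝ => t * (1 - t^2/(n:ℝ))^k) :=
      (contDiff_id.mul (contDiff_g n k)).of_le (by exact_mod_cast le_top)
    have key : iteratedDeriv (j+2) (fun t : ℝ => (1 - t^2/(n:ℝ))^(k+1)) y
        = (-(2*((k:ℝ)+1))/(n:ℝ)) *
            (y * iteratedDeriv (j+1) (fun t : ℝ => (1 - t^2/(n:ℝ))^k) y
              + ((j:ℝ)+1) * iteratedDeriv j (fun t : ℝ => (1 - t^2/(n:ℝ))^k) y) := by
      rw [show j+2 = (j+1)+1 from rfl, iteratedDeriv_succ', deriv_g n k,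
        iterd_const_mul hsm _ y, iter_id_mul (j+1) _ (contDiff_g n k) y]
      push_cast
      ring_nf
    rw [key]
    have hA : |iteratedDeriv (j+1) (fun t : ℝ => (1 - t^2/(n:ℝ))^k) y| ≤ C1 :=
      hC1 n hn k hkle y hy
    have hB : |iteratedDeriv j (fun t : ℝ => (1 - t^2/(n:ℝ))^k) y| ≤ C0 :=
      hC0 n hn k hkle y hy
    have hc : |(-(2*((k:ℝ)+1))/(n:ℝ))| ≤ 2 := by
      rw [abs_div, abs_neg, abs_of_nonneg (by positivity), abs_of_pos hn0, div_le_iff₀ hn0]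
      nlinarith
    have hin : |y * iteratedDeriv (j+1) (fun t : ℝ => (1 - t^2/(n:ℝ))^k) y
        + ((j:ℝ)+1) * iteratedDeriv j (fun t : ℝ => (1 - t^2/(n:ℝ))^k) y|
        ≤ a*C1 + ((j:ℝ)+1)*C0 := by
      refine (abs_add_le _ _).trans ?_
      have t1 : |y * iteratedDeriv (j+1) (fun t : ℝ => (1 - t^2/(n:ℝ))^k) y| ≤ a * C1 := by
        rw [abs_mul]; exact mul_le_mul hy hA (abs_nonneg _) ha
      have t2 : |((j:ℝ)+1) * iteratedDeriv j (fun t : ℝ => (1 - t^2/(n:ℝ))^k) y|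
          ≤ ((j:ℝ)+1) * C0 := by
        rw [abs_mul, abs_of_nonneg (by positivity)]
        exact mul_le_mul_of_nonneg_left hB (by positivity)
      linarith
    rw [abs_mul]
    exact mul_le_mul hc hin (abs_nonneg _) (by norm_num)

private lemma gbound {a : ℝ} (ha : 0 ≤ a) : ∀ j, GB a j ∧ GB a (j+1)
  | 0 => ⟨gb_zero a, gb_one ha⟩
  | (j+1) => ⟨(gbound ha j).2, gb_step ha j (gbound ha j).1 (gbound ha j).2⟩

private lemma deriv_f (n : ℕ) (hn : 1 ≤ n) :
    deriv (fun t : ℝ => Real.exp (t^2) * (1 - t^2/(n:ℝ))^n)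
      = fun t => ((n:ℝ))⁻¹ *
          ((-2*t^3 * Real.exp (t^2)) * (1 - t^2/(n:ℝ))^(n-1)) := by
  funext t
  have hn0 : (0:ℝ) < n := by exact_mod_cast hn
  have hsq : HasDerivAt (fun s : ℝ => s^2) (2*t) t := by simpa using hasDerivAt_pow 2 t
  have hexp : HasDerivAt (fun s : ℝ => Real.exp (s^2)) (Real.exp (t^2) * (2*t)) t := hsq.exp
  have hin : HasDerivAt (fun s : ℝ => 1 - s^2/(n:ℝ)) (-(2*t/(n:ℝ))) t := by
    simpa using (hsq.div_const (n:ℝ)).const_sub 1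
  have hpow := hin.pow n
  have h := hexp.mul hpow
  rw [(show HasDerivAt (fun s : ℝ => Real.exp (s^2) * (1 - s^2/(n:ℝ))^n)
    (Real.exp (t^2) * (2*t) * (1 - t^2/(n:ℝ))^n + Real.exp (t^2) * ((n:ℝ) * (1 - t^2/(n:ℝ))^(n-1) * -(2*t/(n:ℝ)))) t from h).deriv]
  have hpowsplit : (1 - t^2/(n:ℝ))^n = (1 - t^2/(n:ℝ))^(n-1) * (1 - t^2/(n:ℝ)) := by
    rw [← pow_succ, Nat.sub_add_cancel hn]
  rw [hpowsplit]
  field_simp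
  ring

/-- For `fₙ(y) = e^{y²}(1 - y²/n)ⁿ`, every derivative of order `ℓ ≥ 1` is `O(1/n)`
uniformly on `{|y| ≤ a}` (within the region `a² < n`). -/
theorem deriv_fn_small (ℓ : ℕ) (hℓ : 1 ≤ ℓ) (a : ℝ) (ha : 0 < a) :
    ∃ c : ℝ, ∀ n : ℕ, 1 ≤ n → a ^ 2 < (n : ℝ) → ∀ y : ℝ, |y| ≤ a →
      |iteratedDeriv ℓ (fun t : ℝ => Real.exp (t ^ 2) * (1 - t ^ 2 / n) ^ n) y| ≤ c / n := by
  obtain ⟨L, rfl⟩ := Nat.exists_eq_succ_of_ne_zero (Nat.one_le_iff_ne_zero.mp hℓ)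
  have hp : ContDiff ℝ (⊤ : ℕ∞) (fun t : ℝ => -2*t^3 * Real.exp (t^2)) :=
    (contDiff_const.mul (contDiff_id.pow 3)).mul (Real.contDiff_exp.comp (contDiff_id.pow 2))
  -- bounds for the iterated derivatives of p on [-a, a]
  have hbd : ∀ i : ℕ, ∃ B : ℝ, 0 ≤ B ∧ ∀ y : ℝ, |y| ≤ a →
      |iteratedDeriv i (fun t : ℝ => -2*t^3 * Real.exp (t^2)) y| ≤ B := by
    intro i
    obtain ⟨B, hB⟩ := (isCompact_Icc (a := -a) (b := a)).exists_bound_of_continuousOn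
      ((hp.continuous_iteratedDeriv i (by exact_mod_cast le_top)).continuousOn)
    refine ⟨max B 0, le_max_right _ _, fun y hy => ?_⟩
    have h := hB y (by rw [Set.mem_Icc]; exact abs_le.mp hy)
    rw [Real.norm_eq_abs] at h
    exact h.trans (le_max_left _ _)
  choose B hB0 hB using hbd
  have hGB : ∀ j : ℕ, ∃ C : ℝ, 0 ≤ C ∧ ∀ n : ℕ, a^2 < (n:ℝ) → ∀ m : ℕ, m ≤ n → ∀ y : ℝ,
      |y| ≤ a → |iteratedDeriv j (fun t : ℝ => (1 - t^2/(n:ℝ))^m) y| ≤ C :=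
    fun j => (gbound ha.le j).1
  choose Cg hCg0 hCg using hGB
  set M : ℝ := ∑ i ∈ Finset.range (L+1), B i with hM_def
  set CG : ℝ := ∑ j ∈ Finset.range (L+1), Cg j with hCG_def
  have hM0 : 0 ≤ M := Finset.sum_nonneg fun i _ => hB0 i
  have hCG0 : 0 ≤ CG := Finset.sum_nonneg fun j _ => hCg0 j
  have hMi : ∀ i, i ≤ L → B i ≤ M := fun i hi =>
    Finset.single_le_sum (fun i _ => hB0 i) (Finset.mem_range.mpr (Nat.lt_succ_of_le hi))
  have hCGj : ∀ j, j ≤ L → Cg j ≤ CG := fun j hj =>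
    Finset.single_le_sum (fun j _ => hCg0 j) (Finset.mem_range.mpr (Nat.lt_succ_of_le hj))
  refine ⟨2^L * M * CG, fun n hn1 hn y hy => ?_⟩
  have hn0 : (0:ℝ) < n := lt_of_le_of_lt (sq_nonneg a) hn
  have hg : ContDiff ℝ (⊤ : ℕ∞) (fun t : ℝ => (1 - t^2/(n:ℝ))^(n-1)) := contDiff_g n (n-1)
  have hq : ContDiff ℝ ((L : ℕ) : ℕ∞)
      (fun t : ℝ => (-2*t^3 * Real.exp (t^2)) * (1 - t^2/(n:ℝ))^(n-1)) :=
    (hp.mul hg).of_le (by exact_mod_cast le_top)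
  have hstep : iteratedDeriv (L+1) (fun t : ℝ => Real.exp (t^2) * (1 - t^2/(n:ℝ))^n) y
      = (n:ℝ)⁻¹ * iteratedDeriv L
          (fun t : ℝ => (-2*t^3 * Real.exp (t^2)) * (1 - t^2/(n:ℝ))^(n-1)) y := by
    rw [iteratedDeriv_succ', deriv_f n hn1, iterd_const_mul hq _ y]
  rw [hstep, abs_mul, abs_of_nonneg (inv_nonneg.mpr hn0.le)]
  have hmain : |iteratedDeriv L
      (fun t : ℝ => (-2*t^3 * Real.exp (t^2)) * (1 - t^2/(n:ℝ))^(n-1)) y| ≤ 2^L * M * CG := by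
    have hnorm : |iteratedDeriv L
        (fun t : ℝ => (-2*t^3 * Real.exp (t^2)) * (1 - t^2/(n:ℝ))^(n-1)) y|
        = ‖iteratedFDeriv ℝ L
            (fun t : ℝ => (-2*t^3 * Real.exp (t^2)) * (1 - t^2/(n:ℝ))^(n-1)) y‖ := by
      rw [norm_iteratedFDeriv_eq_norm_iteratedDeriv, Real.norm_eq_abs]
    rw [hnorm]
    have hmul := norm_iteratedFDeriv_mul_le (𝕜 := ℝ)
      (N := ((⊤ : ℕ∞) : WithTop ℕ∞)) hp hg y (n := L) (by exact_mod_cast le_top)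
    refine hmul.trans ?_
    have hterm : ∀ i ∈ Finset.range (L+1),
        (L.choose i : ℝ) * ‖iteratedFDeriv ℝ i (fun t : ℝ => -2*t^3 * Real.exp (t^2)) y‖ *
          ‖iteratedFDeriv ℝ (L-i) (fun t : ℝ => (1 - t^2/(n:ℝ))^(n-1)) y‖
        ≤ (L.choose i : ℝ) * M * CG := by
      intro i hi
      have hiL : i ≤ L := Nat.lt_succ_iff.mp (Finset.mem_range.mp hi)
      have h1 : ‖iteratedFDeriv ℝ i (fun t : ℝ => -2*t^3 * Real.exp (t^2)) y‖ ≤ M := by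
        rw [norm_iteratedFDeriv_eq_norm_iteratedDeriv, Real.norm_eq_abs]
        exact (hB i y hy).trans (hMi i hiL)
      have h2 : ‖iteratedFDeriv ℝ (L-i) (fun t : ℝ => (1 - t^2/(n:ℝ))^(n-1)) y‖ ≤ CG := by
        rw [norm_iteratedFDeriv_eq_norm_iteratedDeriv, Real.norm_eq_abs]
        exact (hCg (L-i) n hn (n-1) (Nat.sub_le n 1) y hy).trans (hCGj (L-i) (Nat.sub_le L i))
      have hch : (0:ℝ) ≤ (L.choose i : ℝ) := Nat.cast_nonneg _
      calc (L.choose i : ℝ) * ‖iteratedFDeriv ℝ i (fun t : ℝ => -2*t^3 * Real.exp (t^2)) y‖ *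
            ‖iteratedFDeriv ℝ (L-i) (fun t : ℝ => (1 - t^2/(n:ℝ))^(n-1)) y‖
          ≤ (L.choose i : ℝ) * M *
            ‖iteratedFDeriv ℝ (L-i) (fun t : ℝ => (1 - t^2/(n:ℝ))^(n-1)) y‖ := by
            have := mul_le_mul_of_nonneg_left h1 hch
            exact mul_le_mul_of_nonneg_right this (norm_nonneg _)
        _ ≤ (L.choose i : ℝ) * M * CG :=
            mul_le_mul_of_nonneg_left h2 (by positivity)
    refine (Finset.sum_le_sum hterm).trans ?_
    have : ∑ i ∈ Finset.range (L+1), (L.choose i : ℝ) * M * CG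
        = (∑ i ∈ Finset.range (L+1), (L.choose i : ℝ)) * M * CG := by
      rw [← Finset.sum_mul, ← Finset.sum_mul]
    rw [this]
    have hsum : (∑ i ∈ Finset.range (L+1), (L.choose i : ℝ)) = 2^L := by
      rw [← Nat.cast_sum, Nat.sum_range_choose]
      push_cast; ring
    rw [hsum]
  calc (n:ℝ)⁻¹ * |iteratedDeriv L
        (fun t : ℝ => (-2*t^3 * Real.exp (t^2)) * (1 - t^2/(n:ℝ))^(n-1)) y|
      ≤ (n:ℝ)⁻¹ * (2^L * M * CG) := mul_le_mul_of_nonneg_left hmain (inv_nonneg.mpr hn0.le)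
    _ = 2^L * M * CG / n := by rw [div_eq_mul_inv]; ring
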